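/- There exists a real number λ such that U^{hijk} = λ·(h^{hj}h^{ik} − h^{hk}h^{ij}) for all indices h, i, j, k if and only if there exists a real number S such that K²·S^{hijk} = S·(h^{hj}h^{ik} − h^{hk}h^{ij}) for all indices h, i, j, k (the S3-likeness condition at p); moreover, if U^{hijk} = λ·(h^{hj}h^{ik} − h^{hk}h^{ij}) holds for all indices, then K²·S^{hijk} = S·(h^{hj}h^{ik} − h^{hk}h^{ij}) holds with S = ((m−2)²/4)·[ (m−1)λ + 1/(m−1) ]. -/

import Mathlib

open Finset

noncomputable section

variable {n : ℕ}

/-- Generic symmetric polynomial sum. -/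
def Psum {n ℓ : ℕ} (c : (Fin ℓ → Fin n) → ℝ) (q : Fin n → ℝ) : ℝ :=
  ∑ ι : Fin ℓ → Fin n, c ι * ∏ t, q (ι t)

lemma sum_pi_fin_succ {ℓ : ℕ} (f : (Fin (ℓ+1) → Fin n) → ℝ) :
    ∑ ι : Fin (ℓ+1) → Fin n, f ι
      = ∑ x : Fin n, ∑ ι : Fin ℓ → Fin n, f (Fin.cons x ι) := by
  rw [← Equiv.sum_comp (Fin.consEquiv fun _ => Fin n) f, Fintype.sum_prod_type]
  rfl

lemma prod_erase_zero {ℓ : ℕ} (f : Fin (ℓ+1) → ℝ) :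
    ∏ t ∈ Finset.univ.erase 0, f t = ∏ t : Fin ℓ, f t.succ := by
  rw [Fin.univ_succ, Finset.erase_cons, Finset.prod_map]
  rfl

lemma Psum_succ {ℓ : ℕ} (c : (Fin (ℓ+1) → Fin n) → ℝ) (q : Fin n → ℝ) :
    Psum c q = ∑ x : Fin n, q x * Psum (fun ι => c (Fin.cons x ι)) q := by
  rw [Psum, sum_pi_fin_succ]
  refine Finset.sum_congr rfl fun x _ => ?_
  rw [Psum, Finset.mul_sum]
  refine Finset.sum_congr rfl fun ι _ => ?_
  rw [Fin.prod_univ_succ]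
  simp only [Fin.cons_zero, Fin.cons_succ]
  ring

lemma hasDerivAt_Psum {ℓ : ℕ} (c : (Fin (ℓ+1) → Fin n) → ℝ)
    (hc : ∀ (σ : Equiv.Perm (Fin (ℓ+1))) ι, c (ι ∘ σ) = c ι) (k : Fin n) (q : Fin n → ℝ) :
    HasDerivAt (fun t => Psum c (Function.update q k t))
      ((ℓ+1 : ℝ) * Psum (fun ι => c (Fin.cons k ι)) q) (q k) := by
  have key : ∀ ι : Fin (ℓ+1) → Fin n,
      HasDerivAt (fun t => c ι * ∏ t', Function.update q k t (ι t'))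
        (c ι * ∑ t', (if ι t' = k then ∏ t'' ∈ Finset.univ.erase t', q (ι t'') else 0))
        (q k) := by
    intro ι
    have hf : ∀ t' : Fin (ℓ+1), t' ∈ Finset.univ →
        HasDerivAt (fun t : ℝ => Function.update q k t (ι t'))
          (if ι t' = k then (1:ℝ) else 0) (q k) := by
      intro t' _
      by_cases h : ι t' = k
      · rw [if_pos h]
        refine (hasDerivAt_id (q k)).congr_of_eventuallyEq ?_
        filter_upwards with t
        rw [h, Function.update_self, id]
      · rw [if_neg h]
        refine (hasDerivAt_const (q k) (q (ι t'))).congr_of_eventuallyEq ?_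
        filter_upwards with t
        rw [Function.update_of_ne h]
    have := (HasDerivAt.fun_finsetProd hf).const_mul (c ι)
    refine this.congr_deriv (Eq.symm ?_)
    congr 1
    apply Finset.sum_congr rfl
    intro t' _
    simp only [smul_eq_mul, Function.update_eq_self]
    by_cases h : ι t' = k <;> simp [h]
  have total := HasDerivAt.fun_sum (fun ι (_ : ι ∈ Finset.univ) => key ι)
  refine total.congr_deriv (Eq.symm ?_)
  -- now the algebraic identity on the derivative value
  have H : ∀ t' : Fin (ℓ+1),
      ∑ ι : Fin (ℓ+1) → Fin n, c ι *
        (if ι t' = k then ∏ t'' ∈ Finset.univ.erase t', q (ι t'') else 0)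
        = Psum (fun ι => c (Fin.cons k ι)) q := by
    intro t'
    have swapid : ∀ ι : Fin (ℓ+1) → Fin n,
        c (ι ∘ (Equiv.swap 0 t')) *
          (if (ι ∘ (Equiv.swap 0 t')) t' = k then
            ∏ t'' ∈ Finset.univ.erase t', q ((ι ∘ (Equiv.swap 0 t')) t'') else 0)
        = c ι * (if ι 0 = k then ∏ t'' ∈ Finset.univ.erase 0, q (ι t'') else 0) := by
      intro ι
      rw [hc]
      congr 1
      rw [Function.comp_apply, Equiv.swap_apply_right]
      congr 1
      refine Finset.prod_bij' (fun t'' _ => Equiv.swap 0 t' t'')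
        (fun s _ => Equiv.swap 0 t' s) ?_ ?_ ?_ ?_ ?_
      · intro a ha
        simp only [Finset.mem_erase, Finset.mem_univ, and_true] at ha ⊢
        intro h0
        apply ha
        have := congrArg (Equiv.swap 0 t') h0
        simpa [Equiv.swap_apply_left] using this
      · intro a ha
        simp only [Finset.mem_erase, Finset.mem_univ, and_true] at ha ⊢
        intro h0
        apply ha
        have := congrArg (Equiv.swap 0 t') h0
        simpa [Equiv.swap_apply_right] using this
      · intro a _; simp
      · intro a _; simp
      · intro a _; rfl
    calc ∑ ι : Fin (ℓ+1) → Fin n, c ι *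
          (if ι t' = k then ∏ t'' ∈ Finset.univ.erase t', q (ι t'') else 0)
        = ∑ ι : Fin (ℓ+1) → Fin n, c ι *
            (if ι 0 = k then ∏ t'' ∈ Finset.univ.erase 0, q (ι t'') else 0) := by
          rw [← Equiv.sum_comp (Equiv.arrowCongr (Equiv.swap (0 : Fin (ℓ+1)) t') (Equiv.refl (Fin n)))
            (fun ι => c ι * (if ι t' = k then ∏ t'' ∈ Finset.univ.erase t', q (ι t'') else 0))]
          refine Finset.sum_congr rfl fun ι _ => ?_
          have : (Equiv.arrowCongr (Equiv.swap (0 : Fin (ℓ+1)) t') (Equiv.refl (Fin n))) ι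
              = ι ∘ (Equiv.swap 0 t') := by
            funext s; simp [Equiv.arrowCongr]
          rw [this, swapid]
      _ = Psum (fun ι => c (Fin.cons k ι)) q := by
          rw [sum_pi_fin_succ (fun ι => c ι * (if ι 0 = k then ∏ t'' ∈ Finset.univ.erase 0, q (ι t'') else 0))]
          rw [Finset.sum_comm, Psum]
          refine Finset.sum_congr rfl fun ι' _ => ?_
          simp only [Fin.cons_zero, prod_erase_zero, Fin.cons_succ, mul_ite, mul_zero]
          rw [Finset.sum_ite_eq' Finset.univ k (fun x => c (Fin.cons x ι') * ∏ t, q (ι' t))]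
          simp
  calc (ℓ+1 : ℝ) * Psum (fun ι => c (Fin.cons k ι)) q
      = ∑ _t' : Fin (ℓ+1), Psum (fun ι => c (Fin.cons k ι)) q := by
        rw [Finset.sum_const]; simp [nsmul_eq_mul]
    _ = ∑ t' : Fin (ℓ+1), ∑ ι : Fin (ℓ+1) → Fin n, c ι *
          (if ι t' = k then ∏ t'' ∈ Finset.univ.erase t', q (ι t'') else 0) :=
        Finset.sum_congr rfl fun t' _ => (H t').symm
    _ = ∑ ι : Fin (ℓ+1) → Fin n, ∑ t' : Fin (ℓ+1), c ι *
          (if ι t' = k then ∏ t'' ∈ Finset.univ.erase t', q (ι t'') else 0) :=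
        Finset.sum_comm
    _ = ∑ ι : Fin (ℓ+1) → Fin n, c ι * ∑ t' : Fin (ℓ+1),
          (if ι t' = k then ∏ t'' ∈ Finset.univ.erase t', q (ι t'') else 0) := by
        refine Finset.sum_congr rfl fun ι _ => ?_
        rw [Finset.mul_sum]

/-- Extend a permutation of `Fin ℓ` to `Fin (ℓ+1)` fixing `0`. -/
def permSucc {ℓ : ℕ} (σ : Equiv.Perm (Fin ℓ)) : Equiv.Perm (Fin (ℓ+1)) :=
  (finSuccEquiv ℓ).trans ((Equiv.optionCongr σ).trans (finSuccEquiv ℓ).symm)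

lemma cons_comp_permSucc {α : Type*} {ℓ : ℕ} (x : α) (ι : Fin ℓ → α) (σ : Equiv.Perm (Fin ℓ)) :
    (Fin.cons x ι) ∘ (permSucc σ) = Fin.cons x (ι ∘ σ) := by
  funext t
  refine Fin.cases ?_ (fun s => ?_) t <;>
    simp [permSucc, Function.comp, finSuccEquiv_zero, finSuccEquiv_succ]

lemma cons_cons_comp_swap {α : Type*} {ℓ : ℕ} (x y : α) (ι : Fin ℓ → α) :
    (Fin.cons x (Fin.cons y ι)) ∘ (Equiv.swap (0 : Fin (ℓ+2)) 1) = Fin.cons y (Fin.cons x ι) := by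
  funext t
  refine Fin.cases ?_ (fun s => ?_) t
  · simp [Equiv.swap_apply_left]
  · refine Fin.cases ?_ (fun u => ?_) s
    · have : (Fin.succ (0 : Fin (ℓ+1))) = (1 : Fin (ℓ+2)) := rfl
      simp [this, Equiv.swap_apply_right]
    · have h1 : (Fin.succ (Fin.succ u)) ≠ (0 : Fin (ℓ+2)) := Fin.succ_ne_zero _
      have h2 : (Fin.succ (Fin.succ u)) ≠ (1 : Fin (ℓ+2)) := Fin.succ_succ_ne_one u
      simp [Equiv.swap_apply_of_ne_of_ne h1 h2]

lemma continuous_Psum {ℓ : ℕ} (c : (Fin ℓ → Fin n) → ℝ) : Continuous (Psum c) := by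
  unfold Psum
  exact continuous_finset_sum _ fun ι _ =>
    (continuous_const.mul (continuous_finset_prod _ fun t _ => continuous_apply (ι t)))
-- ============ definitions from the problem statement ============


/-- `A(p) = ∑ a^{i₁…i_m} p_{i₁}⋯p_{i_m}`, where `m = M + 3 ≥ 3`. -/
def Afun {n M : ℕ} (a : (Fin (M + 3) → Fin n) → ℝ) (p : Fin n → ℝ) : ℝ :=
  ∑ ι : Fin (M + 3) → Fin n, a ι * ∏ t, p (ι t)

/-- `K(p) = A(p)^{1/m}`. -/
def Kfun {n M : ℕ} (a : (Fin (M + 3) → Fin n) → ℝ) (p : Fin n → ℝ) : ℝ :=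
  Afun a p ^ ((1 : ℝ) / (M + 3))

/-- `a^i = (∑ a^{i i₂…i_m} p_{i₂}⋯p_{i_m}) / K^{m-1}`. -/
def aU1 {n M : ℕ} (a : (Fin (M + 3) → Fin n) → ℝ) (i : Fin n) (p : Fin n → ℝ) : ℝ :=
  (∑ ι : Fin (M + 2) → Fin n, a (Fin.cons i ι) * ∏ t, p (ι t)) / Kfun a p ^ (M + 2)

/-- `a^{ij} = (∑ a^{i j i₃…i_m} p_{i₃}⋯p_{i_m}) / K^{m-2}`. -/
def aU2 {n M : ℕ} (a : (Fin (M + 3) → Fin n) → ℝ) (i j : Fin n) (p : Fin n → ℝ) : ℝ :=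
  (∑ ι : Fin (M + 1) → Fin n, a (Fin.cons i (Fin.cons j ι)) * ∏ t, p (ι t)) / Kfun a p ^ (M + 1)

/-- `a^{ijk} = (∑ a^{i j k i₄…i_m} p_{i₄}⋯p_{i_m}) / K^{m-3}`. -/
def aU3 {n M : ℕ} (a : (Fin (M + 3) → Fin n) → ℝ) (i j k : Fin n) (p : Fin n → ℝ) : ℝ :=
  (∑ ι : Fin M → Fin n, a (Fin.cons i (Fin.cons j (Fin.cons k ι))) * ∏ t, p (ι t)) / Kfun a p ^ M

/-- Partial derivative `∂f/∂p_k` of a function of `p`. -/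
def pd {n : ℕ} (f : (Fin n → ℝ) → ℝ) (k : Fin n) (p : Fin n → ℝ) : ℝ :=
  deriv (fun t => f (Function.update p k t)) (p k)

/-- Fundamental metrical d-tensor `g^{ij} = (1/2) ∂²(K²)/∂p_i∂p_j`. -/
def gU {n M : ℕ} (a : (Fin (M + 3) → Fin n) → ℝ) (i j : Fin n) (p : Fin n → ℝ) : ℝ :=
  (1 / 2 : ℝ) * pd (fun q => pd (fun r => Kfun a r ^ 2) j q) i p

/-- Angular metrical d-tensor `h^{ij} = K ∂²K/∂p_i∂p_j`. -/
def hU {n M : ℕ} (a : (Fin (M + 3) → Fin n) → ℝ) (i j : Fin n) (p : Fin n → ℝ) : ℝ :=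
  Kfun a p * pd (fun q => pd (Kfun a) j q) i p

/-- v-torsion d-tensor `C^{ijk} = -(1/2) ∂g^{ij}/∂p_k`. -/
def CU {n M : ℕ} (a : (Fin (M + 3) → Fin n) → ℝ) (i j k : Fin n) (p : Fin n → ℝ) : ℝ :=
  -(1 / 2 : ℝ) * pd (gU a i j) k p

/-- Symmetry of `a` in all of its `m` indices. -/
def aSym {n M : ℕ} (a : (Fin (M + 3) → Fin n) → ℝ) : Prop :=
  ∀ (σ : Equiv.Perm (Fin (M + 3))) (ι : Fin (M + 3) → Fin n), a (ι ∘ σ) = a ι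

/-- `a_i = ∑_s a_{is} a^s`, where `aLow` is the inverse matrix of `(a^{ij})`. -/
def aL {n M : ℕ} (a : (Fin (M + 3) → Fin n) → ℝ) (aLow : Matrix (Fin n) (Fin n) ℝ)
    (p : Fin n → ℝ) (i : Fin n) : ℝ :=
  ∑ s, aLow i s * aU1 a s p

/-- `a_i^{jk} = ∑_s a_{is} a^{sjk}`. -/
def aL3 {n M : ℕ} (a : (Fin (M + 3) → Fin n) → ℝ) (aLow : Matrix (Fin n) (Fin n) ℝ)
    (p : Fin n → ℝ) (i j k : Fin n) : ℝ :=
  ∑ s, aLow i s * aU3 a s j k p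

/-- `g_{ij} = (1/(m-1)) a_{ij} + ((m-2)/(m-1)) a_i a_j`, the inverse of `g^{ij}`. -/
def gL {n M : ℕ} (a : (Fin (M + 3) → Fin n) → ℝ) (aLow : Matrix (Fin n) (Fin n) ℝ)
    (p : Fin n → ℝ) (i j : Fin n) : ℝ :=
  (1 / (M + 2 : ℝ)) * aLow i j + ((M + 1 : ℝ) / (M + 2)) * aL a aLow p i * aL a aLow p j

/-- v-derivation components `C_i^{jk} = ∑_s g_{is} C^{sjk}`. -/
def CL {n M : ℕ} (a : (Fin (M + 3) → Fin n) → ℝ) (aLow : Matrix (Fin n) (Fin n) ℝ)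
    (p : Fin n → ℝ) (i j k : Fin n) : ℝ :=
  ∑ s, gL a aLow p i s * CU a s j k p

/-- v-curvature d-tensor `S^{hijk} = ∑_r (C_r^{ij} C^{rhk} - C_r^{ik} C^{rhj})`. -/
def Scurv {n M : ℕ} (a : (Fin (M + 3) → Fin n) → ℝ) (aLow : Matrix (Fin n) (Fin n) ℝ)
    (p : Fin n → ℝ) (h i j k : Fin n) : ℝ :=
  ∑ r, (CL a aLow p r i j * CU a r h k p - CL a aLow p r i k * CU a r h j p)

/-- `U^{hijk} = ∑_r (a_r^{ij} a^{rhk} - a_r^{ik} a^{rhj})`. -/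
def Ufun {n M : ℕ} (a : (Fin (M + 3) → Fin n) → ℝ) (aLow : Matrix (Fin n) (Fin n) ℝ)
    (p : Fin n → ℝ) (h i j k : Fin n) : ℝ :=
  ∑ r, (aL3 a aLow p r i j * aU3 a r h k p - aL3 a aLow p r i k * aU3 a r h j p)


-- ============ analytic layer ============
section analytic

variable {n M : ℕ} (a : (Fin (M + 3) → Fin n) → ℝ)

lemma Kpos {q : Fin n → ℝ} (hq : 0 < Afun a q) : 0 < Kfun a q :=
  Real.rpow_pos_of_pos hq _

lemma Kpow {q : Fin n → ℝ} (hq : 0 < Afun a q) : Kfun a q ^ (M + 3) = Afun a q := by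
  rw [Kfun, ← Real.rpow_natCast (Afun a q ^ ((1:ℝ) / (M + 3))) (M + 3),
    ← Real.rpow_mul hq.le]
  rw [show (1:ℝ) / (M + 3) * ((M + 3 : ℕ) : ℝ) = 1 by
    push_cast; field_simp]
  exact Real.rpow_one _

lemma symPrefix1 (hsym : aSym a) (i : Fin n) (σ : Equiv.Perm (Fin (M + 2)))
    (ι : Fin (M + 2) → Fin n) : a (Fin.cons i (ι ∘ σ)) = a (Fin.cons i ι) := by
  have := hsym (permSucc σ) (Fin.cons i ι)
  rwa [cons_comp_permSucc] at this

lemma symPrefix2 (hsym : aSym a) (i j : Fin n) (σ : Equiv.Perm (Fin (M + 1)))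
    (ι : Fin (M + 1) → Fin n) :
    a (Fin.cons i (Fin.cons j (ι ∘ σ))) = a (Fin.cons i (Fin.cons j ι)) := by
  have := hsym (permSucc (permSucc σ)) (Fin.cons i (Fin.cons j ι))
  rwa [cons_comp_permSucc, cons_comp_permSucc] at this

lemma aU1_eq_Psum (i : Fin n) (q : Fin n → ℝ) (hq : 0 < Afun a q) :
    Psum (fun ι => a (Fin.cons i ι)) q = aU1 a i q * Kfun a q ^ (M + 2) := by
  rw [aU1, div_mul_cancel₀]
  · rfl
  · exact pow_ne_zero _ (Kpos a hq).ne'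

lemma aU2_eq_Psum (i j : Fin n) (q : Fin n → ℝ) (hq : 0 < Afun a q) :
    Psum (fun ι => a (Fin.cons i (Fin.cons j ι))) q = aU2 a i j q * Kfun a q ^ (M + 1) := by
  rw [aU2, div_mul_cancel₀]
  · rfl
  · exact pow_ne_zero _ (Kpos a hq).ne'

lemma aU3_eq_Psum (i j k : Fin n) (q : Fin n → ℝ) (hq : 0 < Afun a q) :
    Psum (fun ι => a (Fin.cons i (Fin.cons j (Fin.cons k ι)))) q
      = aU3 a i j k q * Kfun a q ^ M := by
  rw [aU3, div_mul_cancel₀]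
  · rfl
  · exact pow_ne_zero _ (Kpos a hq).ne'

lemma hasDerivAt_A (hsym : aSym a) (k : Fin n) (q : Fin n → ℝ) (hq : 0 < Afun a q) :
    HasDerivAt (fun t => Afun a (Function.update q k t))
      ((M + 3 : ℝ) * (aU1 a k q * Kfun a q ^ (M + 2))) (q k) := by
  have h := hasDerivAt_Psum a hsym k q
  rw [aU1_eq_Psum a k q hq] at h
  refine h.congr_deriv ?_; push_cast; ring

lemma hasDerivAt_K (hsym : aSym a) (k : Fin n) (q : Fin n → ℝ) (hq : 0 < Afun a q) :
    HasDerivAt (fun t => Kfun a (Function.update q k t)) (aU1 a k q) (q k) := by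
  have h := (hasDerivAt_A a hsym k q hq).rpow_const (p := (1:ℝ) / (M + 3))
    (Or.inl (by rw [Function.update_eq_self]; exact hq.ne'))
  rw [Function.update_eq_self] at h
  have e1 : Afun a q ^ ((1:ℝ) / (M + 3) - 1) = Kfun a q / Afun a q := by
    rw [Real.rpow_sub hq, Real.rpow_one, Kfun]
  rw [e1] at h
  have hK := Kpos a hq
  have hKp := Kpow a hq
  convert h using 1
  · rfl
  rw [← hKp]
  have h3 : ((M : ℝ) + 3) ≠ 0 := by positivity
  field_simp
  ring

lemma hasDerivAt_Kpow (hsym : aSym a) (N : ℕ) (k : Fin n) (q : Fin n → ℝ)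
    (hq : 0 < Afun a q) :
    HasDerivAt (fun t => Kfun a (Function.update q k t) ^ N)
      ((N : ℝ) * Kfun a q ^ (N - 1) * aU1 a k q) (q k) := by
  have := (hasDerivAt_K a hsym k q hq).pow N
  rwa [Function.update_eq_self] at this

lemma hasDerivAt_aU1 (hsym : aSym a) (j k : Fin n) (q : Fin n → ℝ) (hq : 0 < Afun a q) :
    HasDerivAt (fun t => aU1 a j (Function.update q k t))
      ((M + 2 : ℝ) * (aU2 a j k q - aU1 a j q * aU1 a k q) / Kfun a q) (q k) := by
  have hnum := hasDerivAt_Psum (fun ι => a (Fin.cons j ι)) (symPrefix1 a hsym j) k q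
  have hden := hasDerivAt_Kpow a hsym (M + 2) k q hq
  have hK := Kpos a hq
  have hKne : Kfun a q ^ (M + 2) ≠ 0 := pow_ne_zero _ hK.ne'
  have h := hnum.fun_div hden (by rw [Function.update_eq_self]; exact hKne)
  rw [Function.update_eq_self] at h
  have heq : (fun t => Psum (fun ι => a (Fin.cons j ι)) (Function.update q k t) /
      Kfun a (Function.update q k t) ^ (M + 2)) = fun t => aU1 a j (Function.update q k t) := by
    funext t; rfl
  rw [heq] at h
  refine h.congr_deriv (Eq.symm ?_)
  rw [aU2_eq_Psum a j k q hq, aU1_eq_Psum a j q hq]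
  have e : (M + 2 : ℕ) - 1 = M + 1 := rfl
  rw [e]
  have hK1 : Kfun a q ≠ 0 := hK.ne'
  field_simp
  push_cast; ring

lemma hasDerivAt_aU2 (hsym : aSym a) (i j k : Fin n) (q : Fin n → ℝ) (hq : 0 < Afun a q) :
    HasDerivAt (fun t => aU2 a i j (Function.update q k t))
      ((M + 1 : ℝ) * (aU3 a i j k q - aU2 a i j q * aU1 a k q) / Kfun a q) (q k) := by
  have hnum := hasDerivAt_Psum (fun ι => a (Fin.cons i (Fin.cons j ι)))
    (symPrefix2 a hsym i j) k q
  have hden := hasDerivAt_Kpow a hsym (M + 1) k q hq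
  have hK := Kpos a hq
  have hKne : Kfun a q ^ (M + 1) ≠ 0 := pow_ne_zero _ hK.ne'
  have h := hnum.fun_div hden (by rw [Function.update_eq_self]; exact hKne)
  rw [Function.update_eq_self] at h
  have heq : (fun t => Psum (fun ι => a (Fin.cons i (Fin.cons j ι))) (Function.update q k t) /
      Kfun a (Function.update q k t) ^ (M + 1)) = fun t => aU2 a i j (Function.update q k t) := by
    funext t; rfl
  rw [heq] at h
  refine h.congr_deriv (Eq.symm ?_)
  rw [aU3_eq_Psum a i j k q hq, aU2_eq_Psum a i j q hq]
  have e : (M + 1 : ℕ) - 1 = M := rfl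
  rw [e]
  have hK1 : Kfun a q ≠ 0 := hK.ne'
  field_simp
  push_cast; ring

lemma eventually_pos (p : Fin n → ℝ) (hA : 0 < Afun a p) (k : Fin n) :
    ∀ᶠ t in nhds (p k), 0 < Afun a (Function.update p k t) := by
  have hc : Continuous fun t : ℝ => Afun a (Function.update p k t) :=
    (continuous_Psum a).comp (continuous_const.update k continuous_id)
  have h0 : (0:ℝ) < Afun a (Function.update p k (p k)) := by
    rwa [Function.update_eq_self]
  have := hc.continuousAt (x := p k) |>.preimage_mem_nhds (Ioi_mem_nhds h0)
  filter_upwards [this] with t ht using ht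

lemma aU2_symm (hsym : aSym a) (i j : Fin n) (q : Fin n → ℝ) :
    aU2 a i j q = aU2 a j i q := by
  unfold aU2
  congr 1
  refine Finset.sum_congr rfl fun ι _ => ?_
  congr 1
  have := hsym (Equiv.swap 0 1) (Fin.cons j (Fin.cons i ι))
  rwa [cons_cons_comp_swap] at this

lemma aU3_symm12 (hsym : aSym a) (i j k : Fin n) (q : Fin n → ℝ) :
    aU3 a i j k q = aU3 a j i k q := by
  unfold aU3
  congr 1
  refine Finset.sum_congr rfl fun ι _ => ?_
  congr 1
  have := hsym (Equiv.swap 0 1) (Fin.cons j (Fin.cons i (Fin.cons k ι)))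
  rwa [cons_cons_comp_swap] at this

lemma aU3_symm23 (hsym : aSym a) (i j k : Fin n) (q : Fin n → ℝ) :
    aU3 a i j k q = aU3 a i k j q := by
  unfold aU3
  congr 1
  refine Finset.sum_congr rfl fun ι _ => ?_
  congr 1
  have h2 := hsym (permSucc (Equiv.swap 0 1)) (Fin.cons i (Fin.cons k (Fin.cons j ι)))
  rw [cons_comp_permSucc, cons_cons_comp_swap] at h2
  exact h2

lemma hU_eq (hsym : aSym a) (i j : Fin n) (p : Fin n → ℝ) (hA : 0 < Afun a p) :
    hU a i j p = (M + 2 : ℝ) * (aU2 a i j p - aU1 a i p * aU1 a j p) := by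
  have hev : (fun t => pd (Kfun a) j (Function.update p i t))
      =ᶠ[nhds (p i)] (fun t => aU1 a j (Function.update p i t)) := by
    filter_upwards [eventually_pos a p hA i] with t ht
    exact (hasDerivAt_K a hsym j _ ht).deriv
  have h2 : pd (fun q => pd (Kfun a) j q) i p
      = (M + 2 : ℝ) * (aU2 a j i p - aU1 a j p * aU1 a i p) / Kfun a p := by
    rw [pd, hev.deriv_eq]
    exact (hasDerivAt_aU1 a hsym j i p hA).deriv
  rw [hU, h2, aU2_symm a hsym j i]
  have hK := (Kpos a hA).ne'
  rw [mul_comm (Kfun a p), div_mul_cancel₀ _ hK]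
  ring

lemma gU_eq (hsym : aSym a) (i j : Fin n) (q : Fin n → ℝ) (hq : 0 < Afun a q) :
    gU a i j q = (M + 2 : ℝ) * aU2 a i j q - (M + 1 : ℝ) * aU1 a i q * aU1 a j q := by
  have hev : (fun t => pd (fun r => Kfun a r ^ 2) j (Function.update q i t))
      =ᶠ[nhds (q i)] (fun t => 2 * Kfun a (Function.update q i t) *
        aU1 a j (Function.update q i t)) := by
    filter_upwards [eventually_pos a q hq i] with t ht
    have h := (hasDerivAt_K a hsym j _ ht).fun_pow 2
    rw [Function.update_eq_self] at h
    have := h.deriv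
    rw [pd, this]
    try push_cast
    try ring
  have hd : HasDerivAt (fun t => 2 * Kfun a (Function.update q i t) *
      aU1 a j (Function.update q i t))
      (2 * aU1 a i q * aU1 a j q +
        2 * Kfun a q * ((M + 2 : ℝ) * (aU2 a j i q - aU1 a j q * aU1 a i q) / Kfun a q))
      (q i) := by
    have h1 := ((hasDerivAt_K a hsym i q hq).const_mul 2).fun_mul (hasDerivAt_aU1 a hsym j i q hq)
    rw [Function.update_eq_self] at h1
    convert h1 using 1
    try ring
  rw [gU, pd, hev.deriv_eq, hd.deriv, aU2_symm a hsym j i]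
  have hK := (Kpos a hq).ne'
  field_simp
  ring

/-- The base v-torsion combination. -/
def DUt {n M : ℕ} (a : (Fin (M + 3) → Fin n) → ℝ) (i j k : Fin n) (p : Fin n → ℝ) : ℝ :=
  aU3 a i j k p - aU2 a i j p * aU1 a k p - aU2 a i k p * aU1 a j p
    - aU2 a j k p * aU1 a i p + 2 * aU1 a i p * aU1 a j p * aU1 a k p

lemma CU_eq (hsym : aSym a) (i j k : Fin n) (p : Fin n → ℝ) (hA : 0 < Afun a p) :
    CU a i j k p = -(((M + 2 : ℝ) * (M + 1)) / 2) / Kfun a p * DUt a i j k p := by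
  have hev : (fun t => gU a i j (Function.update p k t))
      =ᶠ[nhds (p k)] (fun t => (M + 2 : ℝ) * aU2 a i j (Function.update p k t)
        - (M + 1 : ℝ) * aU1 a i (Function.update p k t) * aU1 a j (Function.update p k t)) := by
    filter_upwards [eventually_pos a p hA k] with t ht
    exact gU_eq a hsym i j _ ht
  have hd : HasDerivAt (fun t => (M + 2 : ℝ) * aU2 a i j (Function.update p k t)
      - (M + 1 : ℝ) * aU1 a i (Function.update p k t) * aU1 a j (Function.update p k t))
      ((M + 2 : ℝ) * ((M + 1 : ℝ) * (aU3 a i j k p - aU2 a i j p * aU1 a k p) / Kfun a p)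
        - ((M + 1 : ℝ) * ((M + 2 : ℝ) * (aU2 a i k p - aU1 a i p * aU1 a k p) / Kfun a p)
            * aU1 a j p
          + (M + 1 : ℝ) * aU1 a i p *
            ((M + 2 : ℝ) * (aU2 a j k p - aU1 a j p * aU1 a k p) / Kfun a p)))
      (p k) := by
    have h1 := (hasDerivAt_aU2 a hsym i j k p hA).const_mul (M + 2 : ℝ)
    have h2 := ((hasDerivAt_aU1 a hsym i k p hA).const_mul (M + 1 : ℝ)).fun_mul
      (hasDerivAt_aU1 a hsym j k p hA)
    rw [Function.update_eq_self] at h2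
    have h3 := h1.fun_sub h2
    convert h3 using 1
    try ring
  rw [CU, pd, hev.deriv_eq, hd.deriv, DUt]
  have hK := (Kpos a hA).ne'
  field_simp
  ring

end analytic

-- ============ algebraic layer ============
section algebraic

variable {n M : ℕ} (a : (Fin (M + 3) → Fin n) → ℝ) (aLow : Matrix (Fin n) (Fin n) ℝ)
  (p : Fin n → ℝ)

lemma euler1 (hA : 0 < Afun a p) : ∑ x, p x * aU1 a x p = Kfun a p := by
  have h := Psum_succ (n := n) a p
  have hK := Kpos a hA
  have h2 : Psum a p = Kfun a p ^ (M + 3) := by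
    rw [Kpow a hA]; rfl
  rw [h2] at h
  have h3 : ∀ x, p x * Psum (fun ι => a (Fin.cons x ι)) p
      = p x * aU1 a x p * Kfun a p ^ (M + 2) := by
    intro x; rw [aU1_eq_Psum a x p hA]; ring
  rw [Finset.sum_congr rfl (fun x _ => h3 x), ← Finset.sum_mul] at h
  have h4 : Kfun a p ^ (M + 3) = Kfun a p * Kfun a p ^ (M + 2) := by ring
  rw [h4] at h
  exact mul_right_cancel₀ (pow_ne_zero _ hK.ne') h.symm

lemma euler2 (hA : 0 < Afun a p) (i : Fin n) :
    ∑ x, p x * aU2 a i x p = Kfun a p * aU1 a i p := by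
  have h := Psum_succ (n := n) (fun ι => a (Fin.cons i ι)) p
  have hK := Kpos a hA
  rw [aU1_eq_Psum a i p hA] at h
  have h3 : ∀ x, p x * Psum (fun ι => a (Fin.cons i (Fin.cons x ι))) p
      = p x * aU2 a i x p * Kfun a p ^ (M + 1) := by
    intro x; rw [aU2_eq_Psum a i x p hA]; ring
  rw [Finset.sum_congr rfl (fun x _ => h3 x), ← Finset.sum_mul] at h
  have h4 : aU1 a i p * Kfun a p ^ (M + 2)
      = (Kfun a p * aU1 a i p) * Kfun a p ^ (M + 1) := by ring
  rw [h4] at h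
  exact mul_right_cancel₀ (pow_ne_zero _ hK.ne') h.symm

lemma euler3 (hA : 0 < Afun a p) (i j : Fin n) :
    ∑ x, p x * aU3 a i j x p = Kfun a p * aU2 a i j p := by
  have h := Psum_succ (n := n) (fun ι => a (Fin.cons i (Fin.cons j ι))) p
  have hK := Kpos a hA
  rw [aU2_eq_Psum a i j p hA] at h
  have h3 : ∀ x, p x * Psum (fun ι => a (Fin.cons i (Fin.cons j (Fin.cons x ι)))) p
      = p x * aU3 a i j x p * Kfun a p ^ M := by
    intro x; rw [aU3_eq_Psum a i j x p hA]; ring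
  rw [Finset.sum_congr rfl (fun x _ => h3 x), ← Finset.sum_mul] at h
  have h4 : aU2 a i j p * Kfun a p ^ (M + 1)
      = (Kfun a p * aU2 a i j p) * Kfun a p ^ M := by ring
  rw [h4] at h
  exact mul_right_cancel₀ (pow_ne_zero _ hK.ne') h.symm

variable (hInv₁ : (Matrix.of fun i j => aU2 a i j p) * aLow = 1)
  (hInv₂ : aLow * (Matrix.of fun i j => aU2 a i j p) = 1)

include hInv₁ in
lemma inv1 (i j : Fin n) : ∑ s, aU2 a i s p * aLow s j = if i = j then (1:ℝ) else 0 := by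
  have h := congrArg (fun m => m i j) hInv₁
  simpa [Matrix.mul_apply, Matrix.one_apply] using h

include hInv₂ in
lemma inv2 (i j : Fin n) : ∑ s, aLow i s * aU2 a s j p = if i = j then (1:ℝ) else 0 := by
  have h := congrArg (fun m => m i j) hInv₂
  simpa [Matrix.mul_apply, Matrix.one_apply] using h

include hInv₂ in
lemma aL_eq (hA : 0 < Afun a p) (i : Fin n) : aL a aLow p i = p i / Kfun a p := by
  have hK := (Kpos a hA).ne'
  rw [eq_div_iff hK, aL, Finset.sum_mul]
  have h1 : ∀ s, aLow i s * aU1 a s p * Kfun a p = aLow i s * ∑ x, p x * aU2 a s x p := by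
    intro s; rw [euler2 a p hA s]; ring
  rw [Finset.sum_congr rfl fun s _ => h1 s]
  have h2 : ∀ s, aLow i s * ∑ x, p x * aU2 a s x p
      = ∑ x, p x * (aLow i s * aU2 a s x p) := by
    intro s; rw [Finset.mul_sum]; exact Finset.sum_congr rfl fun x _ => by ring
  rw [Finset.sum_congr rfl fun s _ => h2 s, Finset.sum_comm]
  have h3 : ∀ x, ∑ s, p x * (aLow i s * aU2 a s x p)
      = p x * (if i = x then (1:ℝ) else 0) := by
    intro x
    rw [← Finset.mul_sum, inv2 a aLow p hInv₂ i x]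
  rw [Finset.sum_congr rfl fun x _ => h3 x]
  simp

variable (hsym : aSym a) (hA : 0 < Afun a p)

include hInv₂ hA in
lemma conL1 : ∑ s, aL a aLow p s * aU1 a s p = 1 := by
  have hK := (Kpos a hA).ne'
  have h : ∀ s, aL a aLow p s * aU1 a s p = (p s * aU1 a s p) / Kfun a p := by
    intro s; rw [aL_eq a aLow p hInv₂ hA]; ring
  rw [Finset.sum_congr rfl fun s _ => h s, ← Finset.sum_div, euler1 a p hA,
    div_self hK]

include hInv₂ hsym hA in
lemma conL2 (j : Fin n) : ∑ s, aL a aLow p s * aU2 a s j p = aU1 a j p := by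
  have hK := (Kpos a hA).ne'
  have h : ∀ s, aL a aLow p s * aU2 a s j p = (p s * aU2 a j s p) / Kfun a p := by
    intro s; rw [aL_eq a aLow p hInv₂ hA, aU2_symm a hsym s j]; ring
  rw [Finset.sum_congr rfl fun s _ => h s, ← Finset.sum_div, euler2 a p hA]
  exact mul_div_cancel_left₀ _ hK

include hInv₂ hsym hA in
lemma conL3 (j k : Fin n) : ∑ s, aL a aLow p s * aU3 a s j k p = aU2 a j k p := by
  have hK := (Kpos a hA).ne'
  have h : ∀ s, aL a aLow p s * aU3 a s j k p = (p s * aU3 a j k s p) / Kfun a p := by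
    intro s
    rw [aL_eq a aLow p hInv₂ hA, aU3_symm12 a hsym s j k, aU3_symm23 a hsym j s k]
    ring
  rw [Finset.sum_congr rfl fun s _ => h s, ← Finset.sum_div, euler3 a p hA]
  exact mul_div_cancel_left₀ _ hK

include hInv₁ hsym in
lemma conX4 (i j h : Fin n) :
    ∑ r, aL3 a aLow p r i j * aU2 a r h p = aU3 a h i j p := by
  have e : ∀ r, aL3 a aLow p r i j * aU2 a r h p
      = ∑ s, aU3 a s i j p * (aU2 a h r p * aLow r s) := by
    intro r
    rw [aL3, Finset.sum_mul]
    refine Finset.sum_congr rfl fun s _ => ?_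
    rw [aU2_symm a hsym r h]
    ring
  rw [Finset.sum_congr rfl fun r _ => e r, Finset.sum_comm]
  have e2 : ∀ s, ∑ r, aU3 a s i j p * (aU2 a h r p * aLow r s)
      = aU3 a s i j p * (if h = s then (1:ℝ) else 0) := by
    intro s
    rw [← Finset.mul_sum, inv1 a aLow p hInv₁ h s]
  rw [Finset.sum_congr rfl fun s _ => e2 s]
  simp

include hInv₁ hsym hA in
lemma conX5 (i j : Fin n) :
    ∑ r, aL3 a aLow p r i j * aU1 a r p = aU2 a i j p := by
  have hK := (Kpos a hA).ne'
  have e : ∀ r, aL3 a aLow p r i j * aU1 a r p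
      = (∑ x, p x * (aL3 a aLow p r i j * aU2 a r x p)) / Kfun a p := by
    intro r
    rw [show ∑ x, p x * (aL3 a aLow p r i j * aU2 a r x p)
        = aL3 a aLow p r i j * ∑ x, p x * aU2 a r x p by
      rw [Finset.mul_sum]; exact Finset.sum_congr rfl fun x _ => by ring]
    rw [euler2 a p hA r]
    field_simp
  rw [Finset.sum_congr rfl fun r _ => e r, ← Finset.sum_div, Finset.sum_comm]
  have e2 : ∀ x, ∑ r, p x * (aL3 a aLow p r i j * aU2 a r x p)
      = p x * aU3 a x i j p := by
    intro x
    rw [← Finset.mul_sum, conX4 a aLow p hInv₁ hsym i j x]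
  rw [Finset.sum_congr rfl fun x _ => e2 x]
  have e3 : ∀ x, p x * aU3 a x i j p = p x * aU3 a i j x p := by
    intro x
    rw [aU3_symm12 a hsym x i j, aU3_symm23 a hsym i x j]
  rw [Finset.sum_congr rfl fun x _ => e3 x, euler3 a p hA]
  exact mul_div_cancel_left₀ _ hK

include hInv₂ hsym hA in
lemma conX6 (h k : Fin n) : ∑ r, aL a aLow p r * DUt a r h k p = 0 := by
  have e : ∀ r, aL a aLow p r * DUt a r h k p
      = aL a aLow p r * aU3 a r h k p
        - (aL a aLow p r * aU2 a r h p) * aU1 a k p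
        - (aL a aLow p r * aU2 a r k p) * aU1 a h p
        - (aL a aLow p r * aU1 a r p) * (aU2 a h k p)
        + 2 * (aL a aLow p r * aU1 a r p) * aU1 a h p * aU1 a k p := by
    intro r; rw [DUt]; ring
  rw [Finset.sum_congr rfl fun r _ => e r]
  simp only [Finset.sum_add_distrib, Finset.sum_sub_distrib, ← Finset.sum_mul,
    ← Finset.mul_sum]
  rw [conL3 a aLow p hInv₂ hsym hA, conL2 a aLow p hInv₂ hsym hA,
    conL2 a aLow p hInv₂ hsym hA, conL1 a aLow p hInv₂ hA]
  ring

/-- The lowered v-torsion combination. -/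
def DLt {n M : ℕ} (a : (Fin (M + 3) → Fin n) → ℝ) (aLow : Matrix (Fin n) (Fin n) ℝ)
    (p : Fin n → ℝ) (r j k : Fin n) : ℝ :=
  aL3 a aLow p r j k - (if r = j then aU1 a k p else 0) - (if r = k then aU1 a j p else 0)
    - aL a aLow p r * aU2 a j k p + 2 * aL a aLow p r * aU1 a j p * aU1 a k p

include hInv₂ hsym hA in
lemma CL_eq (i j k : Fin n) :
    CL a aLow p i j k = -((M + 1 : ℝ) / 2) / Kfun a p * DLt a aLow p i j k := by
  have hK := (Kpos a hA).ne'
  have hM2 : (M : ℝ) + 2 ≠ 0 := by positivity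
  have e : ∀ s, gL a aLow p i s * CU a s j k p
      = -(((M + 2 : ℝ) * (M + 1)) / 2) / Kfun a p *
          ((1 / (M + 2 : ℝ)) * (aLow i s * DUt a s j k p)
            + ((M + 1 : ℝ) / (M + 2)) * aL a aLow p i * (aL a aLow p s * DUt a s j k p)) := by
    intro s
    rw [gL, CU_eq a hsym s j k p hA]
    ring
  rw [CL, Finset.sum_congr rfl fun s _ => e s, ← Finset.mul_sum, Finset.sum_add_distrib]
  have z1 : ∑ s, ((M + 1 : ℝ) / (M + 2)) * aL a aLow p i * (aL a aLow p s * DUt a s j k p)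
      = 0 := by
    rw [← Finset.mul_sum, conX6 a aLow p hInv₂ hsym hA, mul_zero]
  rw [z1, add_zero, ← Finset.mul_sum]
  have z2 : ∑ s, aLow i s * DUt a s j k p = DLt a aLow p i j k := by
    have e2 : ∀ s, aLow i s * DUt a s j k p
        = aLow i s * aU3 a s j k p
          - (aLow i s * aU2 a s j p) * aU1 a k p
          - (aLow i s * aU2 a s k p) * aU1 a j p
          - (aLow i s * aU1 a s p) * aU2 a j k p
          + 2 * (aLow i s * aU1 a s p) * aU1 a j p * aU1 a k p := by
      intro s; rw [DUt]; ring
    rw [Finset.sum_congr rfl fun s _ => e2 s]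
    simp only [Finset.sum_add_distrib, Finset.sum_sub_distrib, ← Finset.sum_mul,
      ← Finset.mul_sum]
    rw [inv2 a aLow p hInv₂ i j, inv2 a aLow p hInv₂ i k, DLt]
    rw [show (∑ s, aLow i s * aU3 a s j k p) = aL3 a aLow p i j k from rfl,
      show (∑ s, aLow i s * aU1 a s p) = aL a aLow p i from rfl]
    simp only [ite_mul, one_mul, zero_mul]
    try ring
  rw [z2]
  field_simp

include hInv₁ hInv₂ hsym hA in
lemma sumDD (h i j k : Fin n) :
    ∑ r, DLt a aLow p r i j * DUt a r h k p
      = (∑ r, aL3 a aLow p r i j * aU3 a r h k p)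
        - aU3 a h i j p * aU1 a k p - aU3 a i j k p * aU1 a h p
        - aU2 a i j p * aU2 a h k p + 2 * aU2 a i j p * aU1 a h p * aU1 a k p
        - aU1 a j p * (aU3 a h i k p - aU2 a h i p * aU1 a k p - aU2 a i k p * aU1 a h p
            - aU2 a h k p * aU1 a i p + 2 * aU1 a i p * aU1 a h p * aU1 a k p)
        - aU1 a i p * (aU3 a h j k p - aU2 a h j p * aU1 a k p - aU2 a j k p * aU1 a h p
            - aU2 a h k p * aU1 a j p + 2 * aU1 a j p * aU1 a h p * aU1 a k p) := by
  have e : ∀ r, DLt a aLow p r i j * DUt a r h k p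
      = aL3 a aLow p r i j * DUt a r h k p
        - (if r = i then aU1 a j p else 0) * DUt a r h k p
        - (if r = j then aU1 a i p else 0) * DUt a r h k p
        - aU2 a i j p * (aL a aLow p r * DUt a r h k p)
        + (2 * aU1 a i p * aU1 a j p) * (aL a aLow p r * DUt a r h k p) := by
    intro r
    rw [DLt]
    ring
  rw [Finset.sum_congr rfl fun r _ => e r]
  simp only [Finset.sum_sub_distrib, Finset.sum_add_distrib, ← Finset.mul_sum,
    Finset.sum_ite_eq', Finset.mem_univ, if_true]
  rw [conX6 a aLow p hInv₂ hsym hA, mul_zero, mul_zero]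
  have eA : ∀ r, aL3 a aLow p r i j * DUt a r h k p
      = aL3 a aLow p r i j * aU3 a r h k p
        - (aL3 a aLow p r i j * aU2 a r h p) * aU1 a k p
        - (aL3 a aLow p r i j * aU2 a r k p) * aU1 a h p
        - (aL3 a aLow p r i j * aU1 a r p) * aU2 a h k p
        + (aL3 a aLow p r i j * aU1 a r p) * (2 * aU1 a h p * aU1 a k p) := by
    intro r; rw [DUt]; ring
  rw [Finset.sum_congr rfl fun r _ => eA r]
  simp only [Finset.sum_sub_distrib, Finset.sum_add_distrib, ← Finset.sum_mul]
  rw [conX4 a aLow p hInv₁ hsym i j h, conX4 a aLow p hInv₁ hsym i j k,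
    conX5 a aLow p hInv₁ hsym hA i j]
  rw [aU3_symm12 a hsym k i j, aU3_symm23 a hsym i k j]
  simp only [DUt]
  simp only [ite_mul, zero_mul, Finset.sum_ite_eq', Finset.mem_univ, if_true,
    Finset.sum_sub_distrib, Finset.sum_add_distrib]
  rw [aU3_symm12 a hsym i h k, aU2_symm a hsym i h,
    aU3_symm12 a hsym j h k, aU2_symm a hsym j h]
  ring

include hInv₁ hInv₂ hsym hA in
lemma master (h i j k : Fin n) :
    Kfun a p ^ 2 * Scurv a aLow p h i j k
      = ((M + 1 : ℝ) ^ 2 / 4) * ((M + 2 : ℝ) * Ufun a aLow p h i j k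
          + (1 / (M + 2 : ℝ)) * (hU a h j p * hU a i k p - hU a h k p * hU a i j p)) := by
  have hK := (Kpos a hA).ne'
  have hM2 : (M : ℝ) + 2 ≠ 0 := by positivity
  have e : ∀ r, CL a aLow p r i j * CU a r h k p - CL a aLow p r i k * CU a r h j p
      = (((M + 1 : ℝ) * ((M + 2 : ℝ) * (M + 1 : ℝ))) / 4) / Kfun a p ^ 2 *
          (DLt a aLow p r i j * DUt a r h k p - DLt a aLow p r i k * DUt a r h j p) := by
    intro r
    rw [CL_eq a aLow p hInv₂ hsym hA, CL_eq a aLow p hInv₂ hsym hA,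
      CU_eq a hsym r h k p hA, CU_eq a hsym r h j p hA]
    field_simp
    ring
  rw [Scurv, Finset.sum_congr rfl fun r _ => e r, ← Finset.mul_sum,
    Finset.sum_sub_distrib, sumDD a aLow p hInv₁ hInv₂ hsym hA h i j k,
    sumDD a aLow p hInv₁ hInv₂ hsym hA h i k j]
  rw [aU3_symm23 a hsym i k j, aU3_symm23 a hsym h k j, aU2_symm a hsym k j]
  rw [Ufun]
  rw [Finset.sum_sub_distrib (f := fun r => aL3 a aLow p r i j * aU3 a r h k p)]
  rw [hU_eq a hsym h j p hA, hU_eq a hsym i k p hA, hU_eq a hsym h k p hA,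
    hU_eq a hsym i j p hA]
  field_simp
  ring

end algebraic
/-- `U^{hijk} = λ (h^{hj}h^{ik} - h^{hk}h^{ij})` for some `λ` iff
the S3-likeness condition `K² S^{hijk} = S (h^{hj}h^{ik} - h^{hk}h^{ij})` holds for
some `S`; moreover, if the former holds with `λ`, then the latter holds with
`S = ((m-2)²/4)[(m-1)λ + 1/(m-1)]`, where `m = M + 3`. -/
theorem stmt_10 {n M : ℕ} (hn : 4 ≤ n) (a : (Fin (M + 3) → Fin n) → ℝ)
    (hsym : aSym a) (p : Fin n → ℝ) (hA : 0 < Afun a p)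
    (aLow : Matrix (Fin n) (Fin n) ℝ)
    (hInv₁ : (Matrix.of fun i j => aU2 a i j p) * aLow = 1)
    (hInv₂ : aLow * (Matrix.of fun i j => aU2 a i j p) = 1) :
    ((∃ lam : ℝ, ∀ h i j k : Fin n,
        Ufun a aLow p h i j k =
          lam * (hU a h j p * hU a i k p - hU a h k p * hU a i j p)) ↔
      (∃ S : ℝ, ∀ h i j k : Fin n,
        Kfun a p ^ 2 * Scurv a aLow p h i j k =
          S * (hU a h j p * hU a i k p - hU a h k p * hU a i j p))) ∧
    (∀ lam : ℝ,
      (∀ h i j k : Fin n,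
        Ufun a aLow p h i j k =
          lam * (hU a h j p * hU a i k p - hU a h k p * hU a i j p)) →
      ∀ h i j k : Fin n,
        Kfun a p ^ 2 * Scurv a aLow p h i j k =
          (((M + 1 : ℝ) ^ 2 / 4) * ((M + 2 : ℝ) * lam + 1 / (M + 2))) *
            (hU a h j p * hU a i k p - hU a h k p * hU a i j p)) := by
  have hM1 : ((M : ℝ) + 1) ≠ 0 := by positivity
  have hM2 : ((M : ℝ) + 2) ≠ 0 := by positivity
  constructor
  · constructor
    · rintro ⟨lam, hl⟩
      refine ⟨((M + 1 : ℝ) ^ 2 / 4) * ((M + 2 : ℝ) * lam + 1 / (M + 2)), fun h i j k => ?_⟩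
      rw [master a aLow p hInv₁ hInv₂ hsym hA h i j k, hl h i j k]
      ring
    · rintro ⟨S, hS⟩
      refine ⟨(S - ((M + 1 : ℝ) ^ 2 / 4) / (M + 2)) /
        (((M + 1 : ℝ) ^ 2 / 4) * (M + 2)), fun h i j k => ?_⟩
      have hm := master a aLow p hInv₁ hInv₂ hsym hA h i j k
      rw [hS h i j k] at hm
      set T := hU a h j p * hU a i k p - hU a h k p * hU a i j p with hT
      set A := ((M + 1 : ℝ) ^ 2 / 4) with hA4
      set B := ((M + 2 : ℝ)) with hB
      have hAne : A ≠ 0 := by rw [hA4]; positivity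
      have hABne : A * B ≠ 0 := mul_ne_zero hAne hM2
      have h2 : A * B * Ufun a aLow p h i j k = (S - A / B) * T := by
        have expand : A / B = A * (1 / B) := by ring
        linear_combination hm.symm + (expand) * T - (1/B) * T * (hA4 ▸ rfl : A = A)
      refine mul_left_cancel₀ hABne ?_
      rw [h2]
      field_simp
  · intro lam hl h i j k
    rw [master a aLow p hInv₁ hInv₂ hsym hA h i j k, hl h i j k]
    ring
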